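/- Every smooth (C^∞) function f : C_0(V) × C_1(V) × ⋯ × C_r(V) → ℝ that is invariant under the diagonal action of GL(V) is constant. -/

import Mathlib

open scoped BigOperators

/-- The space `C_m(V)` of normal tensors of order `m`: `(m+2)`-multilinear maps
`T : V^{m+2} → V` that are symmetric in their last `m` arguments and whose total
symmetrization vanishes. -/
def NormalTensor (V : Type*) [NormedAddCommGroup V] [NormedSpace ℝ V] (m : ℕ) :
    Submodule ℝ (ContinuousMultilinearMap ℝ (fun _ : Fin (m + 2) => V) V) where
  carrier := {T |
    (∀ (v : Fin (m + 2) → V) (σ : Equiv.Perm (Fin (m + 2))),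
        (∀ i : Fin (m + 2), (i : ℕ) < 2 → σ i = i) → T (fun i => v (σ i)) = T v) ∧
    (∀ v : Fin (m + 2) → V,
        ∑ σ : Equiv.Perm (Fin (m + 2)), T (fun i => v (σ i)) = 0)}
  add_mem' := by
    rintro a b ⟨ha1, ha2⟩ ⟨hb1, hb2⟩
    refine ⟨fun v σ hσ => ?_, fun v => ?_⟩
    · simp [ha1 v σ hσ, hb1 v σ hσ]
    · simp [Finset.sum_add_distrib, ha2 v, hb2 v]
  zero_mem' := by
    refine ⟨fun v σ hσ => ?_, fun v => ?_⟩ <;> simp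
  smul_mem' := by
    rintro c a ⟨ha1, ha2⟩
    refine ⟨fun v σ hσ => ?_, fun v => ?_⟩
    · simp [ha1 v σ hσ]
    · simp [← Finset.smul_sum, ha2 v]

set_option synthInstance.maxHeartbeats 800000 in
set_option maxHeartbeats 4000000 in
/-- Every smooth function on `C_0(V) × ⋯ × C_r(V)` invariant under the diagonal
action of `GL(V)` is constant. -/
theorem smooth_invariant_function_on_normal_tensors_is_constant
    {V : Type*} [NormedAddCommGroup V] [NormedSpace ℝ V] [FiniteDimensional ℝ V]
    (r : ℕ)
    (f : (∀ m : Fin (r + 1), NormalTensor V m) → ℝ)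
    (hf : @ContDiff ℝ _ _ _ Pi.normedSpace _ _ _ ⊤ f)
    (hinv : ∀ (g : V ≃ₗ[ℝ] V) (T T' : ∀ m : Fin (r + 1), NormalTensor V m),
      (∀ (m : Fin (r + 1)) (v : Fin ((m : ℕ) + 2) → V),
          (T' m).1 v = g ((T m).1 fun i => g.symm (v i))) →
      f T' = f T) :
    ∃ c : ℝ, ∀ T, f T = c := by
  refine ⟨f 0, fun T => ?_⟩
  set φ : ℝ → (∀ m : Fin (r + 1), NormalTensor V m) :=
    fun t m => (t ^ ((m : ℕ) + 1)) • T m with hφ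
  have hφ0 : φ 0 = 0 := by
    funext m
    simp [hφ]
  have hcont : Continuous φ := by
    refine continuous_pi fun m => ?_
    exact (continuous_pow _).smul continuous_const
  have hval : ∀ t : ℝ, t ≠ 0 → f (φ t) = f T := by
    intro t ht
    refine hinv (LinearEquiv.smulOfNeZero ℝ V t⁻¹ (inv_ne_zero ht)) T (φ t) ?_
    intro m v
    have hsymm : ∀ x : V,
        (LinearEquiv.smulOfNeZero ℝ V t⁻¹ (inv_ne_zero ht)).symm x = t • x := by
      intro x
      rw [LinearEquiv.symm_apply_eq]
      show x = t⁻¹ • t • x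
      rw [inv_smul_smul₀ ht]
    have happ : ∀ x : V,
        (LinearEquiv.smulOfNeZero ℝ V t⁻¹ (inv_ne_zero ht)) x = t⁻¹ • x :=
      fun x => rfl
    simp only [hsymm, happ]
    have hunit : (T m).1 (fun i => t • v i) = (t ^ ((m : ℕ) + 2)) • (T m).1 v := by
      have := (T m).1.map_smul_univ (fun _ => t) v
      simpa [Finset.prod_const, Finset.card_univ] using this
    rw [hunit]
    show (t ^ ((m : ℕ) + 1)) • (T m).1 v = t⁻¹ • (t ^ ((m : ℕ) + 2)) • (T m).1 v
    rw [smul_smul]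
    congr 1
    field_simp
    ring
  have hseq : Filter.Tendsto (fun n : ℕ => (1 : ℝ) / (n + 1)) Filter.atTop (nhds 0) :=
    tendsto_one_div_add_atTop_nhds_zero_nat
  have h1 : Filter.Tendsto (fun n : ℕ => f (φ ((1 : ℝ) / (n + 1)))) Filter.atTop
      (nhds (f (φ 0))) :=
    ((by letI : NormedSpace ℝ (∀ m : Fin (r + 1), NormalTensor V m) := Pi.normedSpace; exact hf.continuous : Continuous f).tendsto _).comp ((hcont.tendsto 0).comp hseq)
  have h2 : (fun n : ℕ => f (φ ((1 : ℝ) / (n + 1)))) = fun _ => f T := by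
    funext n
    exact hval _ (by positivity)
  rw [h2] at h1
  have := tendsto_nhds_unique h1 tendsto_const_nhds
  rw [hφ0] at this
  exact this.symm
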